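/- Let D be a graph with a preferable-direction assignment (each alive vertex has a unique preferable outgoing edge direction; dead vertices have none). If a dead vertex d lies in a component containing a repelling edge, and there is a shortest path E₁…E_k from a repelling edge to d with E₁ repelling and E₂,…,E_k not repelling, then the direction of E_i is preferable at α(E_i) for every i ≥ 2; consequently d lies in the forward orbit (under the preferable-direction flow) of the endpoint ω(E₁) of the repelling edge. -/

import Mathlib

/-- A graph given by oriented edges with an involution reversing orientation. -/
structure DGraph where
  V : Type
  E : Type
  src : E → V
  bar : E → E
  bar_involutive : Function.Involutive bar
  bar_ne : ∀ e : E, bar e ≠ e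

/-- Terminal vertex of an oriented edge. -/
def DGraph.tgt (D : DGraph) (e : D.E) : D.V := D.src (D.bar e)

/-- Iteration of the preferable-direction flow: an alive vertex moves to the endpoint
of its preferable outgoing edge. -/
def flowIter (D : DGraph) (pref : D.V → Option D.E) : ℕ → D.V → Option D.V
  | 0, v => some v
  | n + 1, v => (flowIter D pref n v).bind fun u => (pref u).map D.tgt

/-- Lemma 7.4: if a reduced path `E₁ ⋯ E_k` ends at a dead vertex `d`, the edge `E₁`
is repelling, and `E₂, …, E_k` are not repelling, then each `E_i` (`i ≥ 2`) carries
the preferable direction at its initial vertex; consequently `d` lies in the forward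
orbit of `ω(E₁)` under the preferable-direction flow. -/
theorem dead_vertex_in_flow_orbit (D : DGraph) (pref : D.V → Option D.E)
    (hpref : ∀ (v : D.V) (e : D.E), pref v = some e → D.src e = v)
    (es : List D.E) (hne : es ≠ [])
    (hchain : List.Chain' (fun a b => D.tgt a = D.src b) es)
    (hred : List.Chain' (fun a b => b ≠ D.bar a) es)
    (hrep1 : ∀ a : D.E, es.head? = some a →
      pref (D.src a) ≠ some a ∧ pref (D.tgt a) ≠ some (D.bar a))
    (hrest : ∀ (i : ℕ) (h : i < es.length), 1 ≤ i →
      ¬(pref (D.src (es.get ⟨i, h⟩)) ≠ some (es.get ⟨i, h⟩) ∧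
        pref (D.tgt (es.get ⟨i, h⟩)) ≠ some (D.bar (es.get ⟨i, h⟩))))
    (d : D.V) (hd : d = D.tgt (es.getLast hne)) (hdead : pref d = none) :
    (∀ (i : ℕ) (h : i < es.length), 1 ≤ i →
      pref (D.src (es.get ⟨i, h⟩)) = some (es.get ⟨i, h⟩)) ∧
    ∃ n : ℕ, flowIter D pref n (D.tgt (es.head hne)) = some d := by
  
  classical
  have hlen : 0 < es.length := List.length_pos_iff.mpr hne
  have hchain' := List.isChain_iff_getElem.mp hchain
  have hred' := List.isChain_iff_getElem.mp hred
  have hlast : es.getLast hne = es.get ⟨es.length - 1, by omega⟩ := List.getLast_eq_getElem hne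
  have main : ∀ m (i : ℕ) (h : i < es.length), 1 ≤ i → es.length - 1 - i = m →
      pref (D.src (es.get ⟨i, h⟩)) = some (es.get ⟨i, h⟩) := by
    intro m
    induction m with
    | zero =>
      intro i h h1 hm
      rcases not_and_or.mp (hrest i h h1) with hc | hc
      · exact not_not.mp hc
      · exfalso
        have hi : i = es.length - 1 := by omega
        have htd : D.tgt (es.get ⟨i, h⟩) = d := by
          rw [hd, hlast]
          congr 1
          exact congrArg es.get (Fin.mk_eq_mk.mpr hi)
        have := not_not.mp hc
        rw [htd, hdead] at this
        exact Option.some_ne_none _ this.symm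
    | succ m ih =>
      intro i h h1 hm
      rcases not_and_or.mp (hrest i h h1) with hc | hc
      · exact not_not.mp hc
      · exfalso
        have hi1 : i + 1 < es.length := by omega
        have hnext := ih (i + 1) hi1 (by omega) (by omega)
        have hts : D.tgt (es.get ⟨i, h⟩) = D.src (es.get ⟨i + 1, hi1⟩) :=
          hchain' i (by omega)
        have := not_not.mp hc
        rw [hts, hnext] at this
        exact hred' i (by omega) (Option.some.inj this)
  have part1 : ∀ (i : ℕ) (h : i < es.length), 1 ≤ i →
      pref (D.src (es.get ⟨i, h⟩)) = some (es.get ⟨i, h⟩) :=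
    fun i h h1 => main _ i h h1 rfl
  refine ⟨part1, es.length - 1, ?_⟩
  have hhead : es.head hne = es.get ⟨0, hlen⟩ := List.head_eq_getElem_zero hne
  have step : ∀ (j : ℕ) (hj : j < es.length),
      flowIter D pref j (D.tgt (es.head hne)) = some (D.tgt (es.get ⟨j, hj⟩)) := by
    intro j
    induction j with
    | zero => intro hj; simp [flowIter, hhead]
    | succ j ih =>
      intro hj
      have hj' : j < es.length := by omega
      have := ih hj'
      simp only [flowIter, this, Option.bind_some, Option.bind_some]
      have hts : D.tgt (es.get ⟨j, hj'⟩) = D.src (es.get ⟨j + 1, hj⟩) :=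
        hchain' j (by omega)
      rw [hts, part1 (j + 1) hj (by omega)]
      rfl
  have := step (es.length - 1) (by omega)
  rw [this, hd, hlast]
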